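/- Let k, q ∈ ℕ, let H be a k-labeled graph, and let i, b, a_1, …, a_q ∈ Fin k with b ∉ {a_1, …, a_q, i}. Assume no operator occurrence on the left-hand side is useless. Then θ_i(ρ_{a_1→i}(⋯ ρ_{a_q→i}(θ_b(H)) ⋯)) = θ_b(θ_i(ρ_{a_1→i}(⋯ ρ_{a_q→i}(H) ⋯))) as k-labeled graphs, up to label-preserving isomorphism. -/

import Mathlib

/-! ### `k`-labeled graphs and the basic operations on them -/

/-- A `k`-labeled graph: a simple graph together with a labeling of its vertices
by labels from `Fin k`. -/
structure LGraph (k : ℕ) where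
  V : Type
  G : SimpleGraph V
  lab : V → Fin k

namespace LGraph

variable {k : ℕ}

/-- The join operation `η_{a,b}`: add all edges between vertices of label `a`
and vertices of label `b`. -/
def join (a b : Fin k) (H : LGraph k) : LGraph k where
  V := H.V
  G :=
    { Adj := fun u v =>
        H.G.Adj u v ∨ (u ≠ v ∧ ((H.lab u = a ∧ H.lab v = b) ∨ (H.lab u = b ∧ H.lab v = a)))
      symm := by
        constructor
        intro u v h
        rcases h with h | ⟨hne, h⟩
        · exact Or.inl (H.G.symm.symm _ _ h)
        · refine Or.inr ⟨hne.symm, ?_⟩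
          rcases h with ⟨h1, h2⟩ | ⟨h1, h2⟩
          · exact Or.inr ⟨h2, h1⟩
          · exact Or.inl ⟨h2, h1⟩
      loopless := by
        constructor
        intro v h
        rcases h with h | ⟨hne, _⟩
        · exact H.G.loopless.irrefl v h
        · exact hne rfl }
  lab := H.lab

/-- The relabel operation `ρ_{a→b}`: every vertex of label `a` gets label `b` instead. -/
def relabel (a b : Fin k) (H : LGraph k) : LGraph k where
  V := H.V
  G := H.G
  lab := fun v => if H.lab v = a then b else H.lab v

/-- The fuse operation `θ_i`: replace all vertices of label `i` by a single new vertex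
(represented by `none`) of label `i` whose neighbourhood is the union of their
neighbourhoods. -/
def fuse (i : Fin k) (H : LGraph k) : LGraph k where
  V := Option {v : H.V // H.lab v ≠ i}
  G :=
    { Adj := fun x y =>
        match x, y with
        | some u, some v => H.G.Adj u.1 v.1
        | some u, none => ∃ w, H.lab w = i ∧ H.G.Adj u.1 w
        | none, some v => ∃ w, H.lab w = i ∧ H.G.Adj w v.1
        | none, none => False
      symm := by
        constructor
        rintro (_ | u) (_ | v) h
        · exact h
        · obtain ⟨w, hw, ha⟩ := h
          exact ⟨w, hw, ha.symm⟩
        · obtain ⟨w, hw, ha⟩ := h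
          exact ⟨w, hw, ha.symm⟩
        · exact H.G.symm.symm _ _ h
      loopless := by
        constructor
        rintro (_ | v) h
        · exact h
        · exact H.G.loopless.irrefl v.1 h }
  lab := fun x =>
    match x with
    | some u => H.lab u.1
    | none => i

/-- Disjoint union `H1 ⊕ H2` of two `k`-labeled graphs. -/
def union (H1 H2 : LGraph k) : LGraph k where
  V := H1.V ⊕ H2.V
  G := H1.G ⊕g H2.G
  lab := Sum.elim H1.lab H2.lab

/-- Label-preserving isomorphism of `k`-labeled graphs. -/
def LIso (H1 H2 : LGraph k) : Prop :=
  ∃ e : H1.G ≃g H2.G, ∀ v, H2.lab (e v) = H1.lab v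

/-- The occurrence of the join operator `η_{a,b}` applied to `H` is not useless,
i.e. it creates at least one new edge. -/
def joinUseful (a b : Fin k) (H : LGraph k) : Prop :=
  ∃ u v : H.V, u ≠ v ∧ H.lab u = a ∧ H.lab v = b ∧ ¬ H.G.Adj u v

/-- The occurrence of the fuse operator `θ_i` applied to `H` is not useless,
i.e. `H` has at least two vertices of label `i`. -/
def fuseUseful (i : Fin k) (H : LGraph k) : Prop :=
  ∃ u v : H.V, u ≠ v ∧ H.lab u = i ∧ H.lab v = i

/-- The occurrence of a relabel operator `ρ_{a→b}` applied to `H` is not useless,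
i.e. `H` has a vertex of label `a`. -/
def relabelUseful (a : Fin k) (H : LGraph k) : Prop :=
  ∃ v : H.V, H.lab v = a

/-- `relabelSeq i [a₁, …, a_q] H = ρ_{a₁→i}(⋯(ρ_{a_q→i}(H))⋯)`. -/
def relabelSeq (i : Fin k) : List (Fin k) → LGraph k → LGraph k
  | [], H => H
  | a :: as, H => relabel a i (relabelSeq i as H)

/-- None of the relabel operators in `relabelSeq i as H` is useless (this includes
that none of them has the form `ρ_{a→a}`). -/
def relabelSeqUseful (i : Fin k) : List (Fin k) → LGraph k → Prop
  | [], _ => True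
  | a :: as, H => relabelSeqUseful i as H ∧ a ≠ i ∧ relabelUseful a (relabelSeq i as H)

end LGraph


namespace LGraph

variable {k : ℕ}

/-- The label-transformation function implemented by `relabelSeq i as`. -/
def Fseq (i : Fin k) : List (Fin k) → Fin k → Fin k
  | [], x => x
  | a :: as, x => if Fseq i as x = a then i else Fseq i as x

lemma relabelSeq_eq (i : Fin k) (as : List (Fin k)) (H : LGraph k) :
    relabelSeq i as H = ⟨H.V, H.G, fun v => Fseq i as (H.lab v)⟩ := by
  induction as with
  | nil => rfl
  | cons a as ih => simp only [relabelSeq, ih]; rfl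

lemma Fseq_fix (i b : Fin k) (as : List (Fin k)) (hb : b ∉ as) : Fseq i as b = b := by
  induction as with
  | nil => rfl
  | cons a as ih =>
      have hba : b ≠ a := fun h => hb (h ▸ List.mem_cons_self (a := a) (l := as))
      have := ih (fun h => hb (List.mem_cons_of_mem a h))
      simp [Fseq, this, hba]

lemma Fseq_eq (i b : Fin k) (as : List (Fin k)) (hbi : b ≠ i) :
    ∀ x, Fseq i as x = b → x = b := by
  induction as with
  | nil => intro x h; exact h
  | cons a as ih =>
      intro x h
      simp only [Fseq] at h
      split at h
      · exact absurd h.symm hbi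
      · exact ih x h

def lrFun (H : LGraph k) (i b : Fin k) (F : Fin k → Fin k)
    (hbi : b ≠ i) (hFb : F b = b) (hFbb : ∀ x, F x = b → x = b) :
    (fuse i (⟨(fuse b H).V, (fuse b H).G, fun v => F ((fuse b H).lab v)⟩ : LGraph k)).V →
    (fuse b (fuse i (⟨H.V, H.G, fun v => F (H.lab v)⟩ : LGraph k))).V
  | none => some ⟨none, fun h => hbi h.symm⟩
  | some ⟨none, _⟩ => none
  | some ⟨some u, h⟩ => some ⟨some ⟨u.1, h⟩, fun hc => u.2 (hFbb _ hc)⟩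

def rlFun (H : LGraph k) (i b : Fin k) (F : Fin k → Fin k)
    (hbi : b ≠ i) (hFb : F b = b) (hFbb : ∀ x, F x = b → x = b) :
    (fuse b (fuse i (⟨H.V, H.G, fun v => F (H.lab v)⟩ : LGraph k))).V →
    (fuse i (⟨(fuse b H).V, (fuse b H).G, fun v => F ((fuse b H).lab v)⟩ : LGraph k)).V
  | none => some ⟨none, fun h => hbi (hFb.symm.trans h)⟩
  | some ⟨none, _⟩ => none
  | some ⟨some u, h⟩ => some ⟨some ⟨u.1, fun hc => h (show F (H.lab u.1) = b from by rw [hc, hFb])⟩, u.2⟩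

lemma key (H : LGraph k) (i b : Fin k) (F : Fin k → Fin k)
    (hbi : b ≠ i) (hFb : F b = b) (hFbb : ∀ x, F x = b → x = b) :
    LIso (fuse i (⟨(fuse b H).V, (fuse b H).G, fun v => F ((fuse b H).lab v)⟩ : LGraph k))
         (fuse b (fuse i (⟨H.V, H.G, fun v => F (H.lab v)⟩ : LGraph k))) := by
  refine ⟨⟨⟨lrFun H i b F hbi hFb hFbb, rlFun H i b F hbi hFb hFbb, ?_, ?_⟩, ?_⟩, ?_⟩
  · rintro (_ | ⟨(_ | u), h⟩) <;> rfl
  · rintro (_ | ⟨(_ | u), h⟩) <;> rfl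
  · rintro x y
    have hne1 : ∀ z : H.V, F (H.lab z) = i → H.lab z ≠ b :=
      fun z hz hc => hbi (by rw [hc, hFb] at hz; exact hz)
    have hne2 : ∀ z : H.V, H.lab z = b → F (H.lab z) ≠ i :=
      fun z hz hc => hbi (by rw [hz, hFb] at hc; exact hc)
    have hlab : ∀ z : H.V, H.lab z = b → F (H.lab z) = b := fun z hz => by rw [hz, hFb]
    obtain (_ | ⟨(_ | u), hu⟩) := x <;> obtain (_ | ⟨(_ | v), hv⟩) := y
    all_goals (simp only [Equiv.coe_fn_mk, lrFun]; simp only [fuse])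
    · constructor
      · rintro ⟨(_ | w), hw, ha⟩
        · exact ha.elim
        · obtain ⟨z, hz, hz2⟩ := ha
          exact ⟨some ⟨z, hne1 z hz⟩, hz, ⟨w.1, hFbb _ hw, hz2⟩⟩
      · rintro ⟨(_ | w), hw, ha⟩
        · exact absurd (hFb.symm.trans hw) hbi
        · obtain ⟨z, hz, hz2⟩ := ha
          exact ⟨some ⟨z, hne2 z hz⟩, hlab z hz, ⟨w.1, hw, hz2⟩⟩
    · constructor
      · rintro ⟨w, hw, ha⟩
        exact ⟨some ⟨w, hne1 w hw⟩, hw, ha⟩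
      · rintro ⟨(_ | w), hw, ha⟩
        · exact absurd (hFb.symm.trans hw) hbi
        · exact ⟨w.1, hw, ha⟩
    · constructor
      · rintro ⟨(_ | w), hw, ha⟩
        · exact ha.elim
        · obtain ⟨z, hz, hz2⟩ := ha
          exact ⟨some ⟨z, hne1 z hz⟩, hz, ⟨w.1, hFbb _ hw, hz2⟩⟩
      · rintro ⟨(_ | w), hw, ha⟩
        · exact absurd (hFb.symm.trans hw) hbi
        · obtain ⟨z, hz, hz2⟩ := ha
          exact ⟨some ⟨z, hne2 z hz⟩, hlab z hz, ⟨w.1, hw, hz2⟩⟩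
    · constructor
      · rintro ⟨(_ | w), hw, ha⟩
        · exact absurd hw (Ne.symm hbi)
        · exact ⟨w.1, hFbb _ hw, ha⟩
      · rintro ⟨w, hw, ha⟩
        exact ⟨some ⟨w, hne2 w hw⟩, hlab w hw, ha⟩
    · constructor
      · rintro ⟨w, hw, ha⟩
        exact ⟨some ⟨w, hne1 w hw⟩, hw, ha⟩
      · rintro ⟨(_ | w), hw, ha⟩
        · exact absurd (hFb.symm.trans hw) hbi
        · exact ⟨w.1, hw, ha⟩
    · constructor
      · rintro ⟨(_ | w), hw, ha⟩
        · exact absurd hw (Ne.symm hbi)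
        · exact ⟨w.1, hFbb _ hw, ha⟩
      · rintro ⟨w, hw, ha⟩
        exact ⟨some ⟨w, hne2 w hw⟩, hlab w hw, ha⟩
  · rintro (_ | ⟨(_ | u), h⟩)
    · rfl
    · exact hFb.symm
    · rfl

end LGraph

open LGraph

/-- rule 11: if `b ∉ {a₁, …, a_q, i}`, then
`θ_i(ρ_{a₁→i}(⋯ρ_{a_q→i}(θ_b(H))⋯)) = θ_b(θ_i(ρ_{a₁→i}(⋯ρ_{a_q→i}(H)⋯)))`
provided that no operator occurrence on the left-hand side is useless. -/
theorem fuse_relabelSeq_fuse_comm {k : ℕ} (H : LGraph k) (i b : Fin k)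
    (as : List (Fin k)) (hb : b ∉ as ∧ b ≠ i)
    (hinner : fuseUseful b H)
    (hseq : relabelSeqUseful i as (fuse b H))
    (hfuse : fuseUseful i (relabelSeq i as (fuse b H))) :
    LIso (fuse i (relabelSeq i as (fuse b H)))
         (fuse b (fuse i (relabelSeq i as H))) := by
  obtain ⟨hbs, hbi⟩ := hb
  rw [relabelSeq_eq, relabelSeq_eq]
  exact key H i b (Fseq i as) hbi (Fseq_fix i b as hbs) (Fseq_eq i b as hbi)
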